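/- Let h(x) = a·x for a > 0 and define a_n = 2/(2 + a²·n·(n+1)) for n ∈ ℕ with a₀ = 1. Then (a_n) is strictly decreasing, converges to 0, and for every n ≥ 1 the integral of 1/h(u)² over [a_n, a_{n-1}] equals n. -/

import Mathlib

/-- The sequence aₙ = 2/(2 + a²n(n+1)) is strictly decreasing to 0, a₀ = 1, and the
integral of 1/h(u)² with h(u) = a·u over [aₙ, aₙ₋₁] equals n. -/
theorem sequence_integral_partition
    (a : ℝ) (ha : 0 < a)
    (A : ℕ → ℝ) (hA : ∀ n, A n = 2 / (2 + a ^ 2 * n * (n + 1))) :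
    A 0 = 1 ∧ StrictAnti A ∧ Filter.Tendsto A Filter.atTop (nhds 0) ∧
    ∀ n : ℕ, 1 ≤ n → (∫ u in A n..A (n - 1), 1 / (a * u) ^ 2) = (n : ℝ) := by
  have ha2 : 0 < a ^ 2 := by positivity
  have hden : ∀ n : ℕ, 0 < 2 + a ^ 2 * n * (n + 1) := by
    intro n; positivity
  have hpos : ∀ n : ℕ, 0 < A n := by
    intro n; rw [hA n]; positivity
  refine ⟨by rw [hA 0]; norm_num, ?_, ?_, ?_⟩
  · apply strictAnti_nat_of_succ_lt
    intro n
    rw [hA n, hA (n + 1)]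
    apply div_lt_div_of_pos_left (by norm_num) (hden n)
    have hn0 : (0:ℝ) ≤ (n:ℝ) := Nat.cast_nonneg n
    push_cast
    nlinarith
  · have h1 : Filter.Tendsto (fun n : ℕ => 2 + a ^ 2 * n * (n + 1))
        Filter.atTop Filter.atTop := by
      apply Filter.tendsto_atTop_add_const_left
      apply Filter.tendsto_atTop_mono (f := fun n : ℕ => a ^ 2 * n)
      · intro n
        have hn0 : (0:ℝ) ≤ (n:ℝ) := Nat.cast_nonneg n
        nlinarith [mul_nonneg (mul_nonneg ha2.le hn0) hn0]
      · exact tendsto_natCast_atTop_atTop.const_mul_atTop ha2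
    have h2 := Filter.Tendsto.div_atTop (f := fun _ : ℕ => (2:ℝ))
      tendsto_const_nhds h1
    convert h2 using 1
    ext n; exact hA n
  · intro n hn
    have hmem : (0:ℝ) ∉ Set.uIcc (A n) (A (n - 1)) := by
      intro h
      rcases Set.mem_uIcc.mp h with h | h
      · exact absurd h.1 (not_le.mpr (hpos n))
      · exact absurd h.1 (not_le.mpr (hpos (n - 1)))
    have hint : (∫ u in A n..A (n - 1), 1 / (a * u) ^ 2)
        = (1 / a ^ 2) * ∫ u in A n..A (n - 1), (u : ℝ) ^ (-2 : ℤ) := by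
      rw [← intervalIntegral.integral_const_mul]
      apply intervalIntegral.integral_congr
      intro u hu
      have hu0 : u ≠ 0 := fun h => hmem (h ▸ hu)
      show 1 / (a * u) ^ 2 = 1 / a ^ 2 * u ^ (-2 : ℤ)
      have hz : (u : ℝ) ^ (-2 : ℤ) = (u ^ 2)⁻¹ := by
        rw [zpow_neg, ← zpow_natCast u 2]
        norm_num
      rw [hz]
      field_simp
    rw [hint, integral_zpow (Or.inr ⟨by norm_num, hmem⟩)]
    have hAinv : ∀ m : ℕ, (A m)⁻¹ = (2 + a ^ 2 * m * (m + 1)) / 2 := by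
      intro m
      rw [hA m, inv_div]
    norm_num
    rw [hAinv, hAinv]
    obtain ⟨k, rfl⟩ := Nat.exists_eq_add_of_le hn
    simp only [Nat.add_sub_cancel_left]
    push_cast
    field_simp
    ring
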